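/- Let G = ℤ/nℤ and T the circle group. Then H³(G, T) ≅ ℤ/nℤ. Explicitly, for each k ∈ ℤ the function c_k(a, b, c) := exp(2πi k ā (b̄ + c̄ − (b+c)‾)/n²) (where x̄ denotes the representative of x in {0,…,n−1}) is a 3-cocycle, and k ↦ [c_k] induces the isomorphism ℤ/n ≅ H³(ℤ/n, T). -/

import Mathlib

/-- An additive 3-cocycle with trivial action. -/
def IsAddCocycle3 {G : Type*} [AddGroup G] {T : Type*} [AddCommGroup T]
    (f : G → G → G → T) : Prop :=
  ∀ g h k l : G,
    f h k l - f (g + h) k l + f g (h + k) l - f g h (k + l) + f g h k = 0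

/-- The additive coboundary of `b : G × G → T` (trivial action). -/
def addD2 {G : Type*} [AddGroup G] {T : Type*} [AddCommGroup T] (b : G → G → T) :
    G → G → G → T :=
  fun g h k => b h k - b (g + h) k + b g (h + k) - b g h

/-- The explicit 3-cocycle `c_k(a,b,c) = k ā (b̄ + c̄ − (b+c)‾)/n²` on `ℤ/n` with values
in the circle `ℝ/ℤ`. -/
noncomputable def ck (n : ℕ) (k : ℤ) : ZMod n → ZMod n → ZMod n → AddCircle (1 : ℝ) :=
  fun a b c =>
    (((k : ℝ) * (a.val : ℝ) * ((b.val : ℝ) + (c.val : ℝ) - ((b + c).val : ℝ)) /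
        (n ^ 2 : ℝ) : ℝ) : AddCircle (1 : ℝ))


open Finset

namespace Stmt14Aux


local notation "T" => AddCircle (1 : ℝ)

lemma coe_congr {x y : ℝ} (h : x = y) : (x : T) = (y : T) := by rw [h]

lemma coe_sum {α : Type*} (s : Finset α) (g : α → ℝ) :
    ((∑ a ∈ s, g a : ℝ) : T) = ∑ a ∈ s, ((g a : ℝ) : T) :=
  map_sum (QuotientAddGroup.mk' _) g s

variable (n : ℕ) [NeZero n]

/-- the carry of addition in `ZMod n`. -/
def carr (x y : ZMod n) : ℕ := (x.val + y.val) / n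

lemma val_add_real (x y : ZMod n) :
    (((x + y).val : ℝ)) = x.val + y.val - n * carr n x y := by
  have h1 : (x + y).val + n * carr n x y = x.val + y.val := by
    rw [ZMod.val_add, carr, Nat.mod_add_div]
  have h2 := congrArg (Nat.cast : ℕ → ℝ) h1
  push_cast at h2
  linarith

lemma hnR : (n : ℝ) ≠ 0 := Nat.cast_ne_zero.mpr (NeZero.ne n)

lemma part1 (k : ℤ) : IsAddCocycle3 (ck n k) := by
  intro g h k' l
  simp only [ck]
  rw [show h + (k' + l) = (h + k') + l from (add_assoc h k' l).symm]
  rw [← AddCircle.coe_sub, ← AddCircle.coe_add, ← AddCircle.coe_sub, ← AddCircle.coe_add,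
    AddCircle.coe_eq_zero_iff]
  refine ⟨k * carr n g h * carr n k' l, ?_⟩
  rw [zsmul_eq_mul, mul_one, val_add_real n g h, val_add_real n h k', val_add_real n k' l]
  have hn := hnR n
  push_cast
  field_simp
  ring

lemma part3 (j k : ℤ) :
    ∃ b : ZMod n → ZMod n → T,
      ∀ a b' c : ZMod n,
        ck n (j + k) a b' c = ck n j a b' c + ck n k a b' c + addD2 b a b' c := by
  refine ⟨fun _ _ => 0, fun a b' c => ?_⟩
  have h0 : addD2 (fun _ _ => (0:T)) a b' c = 0 := by simp [addD2]
  rw [h0, add_zero]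
  simp only [ck]
  rw [← AddCircle.coe_add]
  exact coe_congr (by push_cast; ring)

lemma part2 (k : ℤ) :
    (∃ b : ZMod n → ZMod n → T,
        ∀ a b' c : ZMod n, ck n k a b' c = addD2 b a b' c) ↔ (n : ℤ) ∣ k := by
  constructor
  · rintro ⟨b, hb⟩
    rcases eq_or_ne n 1 with h1 | h1
    · exact ⟨k, by rw [h1]; simp⟩
    -- sum of the coboundary over h is zero
    have re1 : ∑ h : ZMod n, b (1 + h) 1 = ∑ h : ZMod n, b h 1 :=
      Fintype.sum_equiv (Equiv.addLeft 1) _ _ (fun x => rfl)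
    have re2 : ∑ h : ZMod n, b 1 (h + 1) = ∑ h : ZMod n, b 1 h :=
      Fintype.sum_equiv (Equiv.addRight 1) _ _ (fun x => rfl)
    have hb1 : ∑ h : ZMod n, addD2 b 1 h 1 = 0 := by
      simp only [addD2]
      rw [Finset.sum_sub_distrib, Finset.sum_add_distrib, Finset.sum_sub_distrib, re1, re2]
      abel
    have hsum : ∑ h : ZMod n, ck n k 1 h 1 = 0 := by
      rw [Finset.sum_congr rfl (fun h _ => hb 1 h 1)]
      exact hb1
    have hval1 : ((1 : ZMod n).val : ℝ) = 1 := by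
      rw [ZMod.val_one'' h1]; norm_num
    have hre : ∑ h : ZMod n, ((h.val : ℝ) + ((1:ZMod n).val : ℝ) - (((h+1) : ZMod n).val : ℝ))
        = n := by
      have re3 : ∑ h : ZMod n, (((h+1).val : ℝ)) = ∑ h : ZMod n, ((h.val : ℝ)) :=
        Fintype.sum_equiv (Equiv.addRight 1) _ _ (fun x => rfl)
      rw [Finset.sum_sub_distrib, Finset.sum_add_distrib, re3, Finset.sum_const, hval1]
      simp [ZMod.card]
    have hckval : ∑ h : ZMod n, ck n k 1 h 1 = (((k : ℝ) / n : ℝ) : T) := by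
      simp only [ck]
      rw [← coe_sum]
      refine coe_congr ?_
      rw [← Finset.sum_div]
      rw [← Finset.mul_sum, hre, hval1]
      have hn := hnR n
      field_simp
    rw [hckval, AddCircle.coe_eq_zero_iff] at hsum
    obtain ⟨m, hm⟩ := hsum
    rw [zsmul_eq_mul, mul_one] at hm
    have hn := hnR n
    have hk : (k : ℝ) = (n : ℝ) * m := by
      field_simp at hm
      linarith
    exact ⟨m, by exact_mod_cast hk⟩
  · rintro ⟨m, rfl⟩
    refine ⟨fun _ _ => 0, fun a b' c => ?_⟩
    have h0 : addD2 (fun _ _ => (0:T)) a b' c = 0 := by simp [addD2]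
    rw [h0]
    simp only [ck]
    rw [AddCircle.coe_eq_zero_iff]
    refine ⟨m * a.val * carr n b' c, ?_⟩
    rw [zsmul_eq_mul, mul_one, val_add_real n b' c]
    have hn := hnR n
    push_cast
    field_simp
    ring


/-- partial sums of `f 1 · y`. -/
noncomputable def Asum (f : ZMod n → ZMod n → ZMod n → T) (m : ℕ) (y : ZMod n) : T :=
  ∑ j ∈ Finset.range m, f 1 (j : ZMod n) y

/-- full sum (the "norm"). -/
noncomputable def Nsum (f : ZMod n → ZMod n → ZMod n → T) (y : ZMod n) : T := Asum n f n y

lemma part4 (f : ZMod n → ZMod n → ZMod n → T) (hf : IsAddCocycle3 f) :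
    ∃ (k : ℤ) (b : ZMod n → ZMod n → T),
      ∀ a b' c : ZMod n, f a b' c = ck n k a b' c + addD2 b a b' c := by
  rcases eq_or_ne n 1 with h1 | h1
  · subst h1
    have hz : f 0 0 0 = 0 := by have := hf 0 0 0 0; simpa using this
    refine ⟨0, fun _ _ => 0, fun a b' c => ?_⟩
    have ha : a = 0 := Subsingleton.elim _ _
    have hb : b' = 0 := Subsingleton.elim _ _
    have hc : c = 0 := Subsingleton.elim _ _
    subst ha; subst hb; subst hc
    rw [hz]
    simp only [ck, addD2]
    norm_num
  · -- the master telescoping identity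
    have master : ∀ (m : ℕ) (k l : ZMod n), f (m : ZMod n) k l =
        f 0 k l + (∑ j ∈ range m, f 1 ((j : ZMod n) + k) l)
          - Asum n f m (k + l) + Asum n f m k := by
      intro m
      induction m with
      | zero => intro k l; simp [Asum]
      | succ m ih =>
        intro k l
        have hc := hf 1 (m : ZMod n) k l
        have h5 : f (1 + (m : ZMod n)) k l =
            f (m : ZMod n) k l + f 1 ((m : ZMod n) + k) l - f 1 (m : ZMod n) (k + l)
              + f 1 (m : ZMod n) k := by
          have h6 : f (1 + (m : ZMod n)) k l -
              (f (m : ZMod n) k l + f 1 ((m : ZMod n) + k) l - f 1 (m : ZMod n) (k + l)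
                + f 1 (m : ZMod n) k)
              = -(f (m : ZMod n) k l - f (1 + (m : ZMod n)) k l + f 1 ((m : ZMod n) + k) l
                  - f 1 (m : ZMod n) (k + l) + f 1 (m : ZMod n) k) := by abel
          rw [← sub_eq_zero, h6, hc, neg_zero]
        have hcast : ((m + 1 : ℕ) : ZMod n) = 1 + (m : ZMod n) := by push_cast; ring
        rw [hcast, h5, ih k l]
        simp only [Asum]
        rw [Finset.sum_range_succ, Finset.sum_range_succ, Finset.sum_range_succ]
        abel
    have hf0 : ∀ k l : ZMod n, f 0 k l = f 0 0 (k + l) - f 0 0 k := by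
      intro k l
      have hc := hf 0 0 k l
      simp only [zero_add, add_zero] at hc
      have h6 : f 0 k l - (f 0 0 (k + l) - f 0 0 k)
          = f 0 k l - f 0 k l + f 0 k l - f 0 0 (k + l) + f 0 0 k := by abel
      rw [← sub_eq_zero, h6, hc]
    -- periodicity of Asum
    have hAper : ∀ (r : ℕ) (y : ZMod n), Asum n f (n + r) y = Nsum n f y + Asum n f r y := by
      intro r y
      simp only [Asum, Nsum]
      rw [Finset.sum_range_add]
      congr 1
      refine Finset.sum_congr rfl fun j _ => ?_
      congr 1
      push_cast
      simp [ZMod.natCast_self]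
    -- the T1 reindexing identity
    have T1 : ∀ (x k l : ZMod n), (∑ j ∈ range x.val, f 1 ((j : ZMod n) + k) l)
        = Asum n f (x + k).val l + (carr n x k) • Nsum n f l - Asum n f k.val l := by
      intro x k l
      have step1 : (∑ j ∈ range x.val, f 1 ((j : ZMod n) + k) l)
          = ∑ j ∈ range x.val, f 1 (((k.val + j : ℕ) : ZMod n)) l := by
        refine Finset.sum_congr rfl fun j _ => ?_
        congr 1
        push_cast [ZMod.natCast_zmod_val]
        ring
      have step2 : Asum n f (k.val + x.val) l
          = Asum n f k.val l + ∑ j ∈ range x.val, f 1 (((k.val + j : ℕ) : ZMod n)) l := by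
        simp only [Asum]; rw [Finset.sum_range_add]
      have hvx := ZMod.val_lt x
      have hvk := ZMod.val_lt k
      have hvadd : (x + k).val = (x.val + k.val) % n := ZMod.val_add x k
      rcases lt_or_ge (x.val + k.val) n with hlt | hge
      · have hc0 : carr n x k = 0 := Nat.div_eq_of_lt hlt
        have hv : (x + k).val = x.val + k.val := by rw [hvadd, Nat.mod_eq_of_lt hlt]
        have hxk : x.val + k.val = k.val + x.val := by omega
        rw [step1, hc0, zero_smul, add_zero, hv, hxk, step2, add_sub_cancel_left]
      · have hmod : (x.val + k.val) % n = x.val + k.val - n := by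
          rw [Nat.mod_eq_sub_mod hge, Nat.mod_eq_of_lt (by omega)]
        have hc1 : carr n x k = 1 := by
          unfold carr
          rw [Nat.div_eq_sub_div (Nat.pos_of_ne_zero (NeZero.ne n)) hge,
            Nat.div_eq_of_lt (by omega)]
        have hv : x.val + k.val = n + (x + k).val := by
          rw [hvadd, hmod]; omega
        have hxk : k.val + x.val = n + (x + k).val := by omega
        rw [hxk, hAper ((x+k).val) l] at step2
        -- step2 : Nsum + Asum (x+k).val = Asum k.val + S
        rw [step1, hc1, one_smul, add_comm (Asum n f (x + k).val l) (Nsum n f l), step2,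
          add_sub_cancel_left]
    -- the key structural identity
    have key : ∀ x k l : ZMod n, f x k l = (carr n x k) • Nsum n f l
        + addD2 (fun x y => f 0 0 y - Asum n f x.val y) x k l := by
      intro x k l
      have hm := master x.val k l
      rw [ZMod.natCast_zmod_val] at hm
      rw [hm, T1 x k l, hf0 k l]
      simp only [addD2]
      abel
    have hNuniv : ∀ y : ZMod n, Nsum n f y = ∑ h : ZMod n, f 1 h y := by
      intro y
      simp only [Nsum, Asum]
      refine Finset.sum_nbij' (fun j => ((j : ZMod n))) (fun h => h.val) ?_ ?_ ?_ ?_ ?_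
      · intro a _; exact Finset.mem_univ _
      · intro a _; exact Finset.mem_range.mpr (ZMod.val_lt a)
      · intro a ha; exact ZMod.val_cast_of_lt (Finset.mem_range.mp ha)
      · intro a _; exact ZMod.natCast_zmod_val a
      · intro a _; rfl
    have hNadd : ∀ k l : ZMod n, Nsum n f (k + l) = Nsum n f k + Nsum n f l := by
      intro k l
      have hsum0 : ∑ h : ZMod n,
          (f h k l - f (1 + h) k l + f 1 (h + k) l - f 1 h (k + l) + f 1 h k) = 0 := by
        rw [Finset.sum_congr rfl (fun h _ => hf 1 h k l)]
        simp
      have r1 : ∑ h : ZMod n, f (1 + h) k l = ∑ h : ZMod n, f h k l :=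
        Fintype.sum_equiv (Equiv.addLeft 1) _ _ fun x => rfl
      have r2 : ∑ h : ZMod n, f 1 (h + k) l = ∑ h : ZMod n, f 1 h l :=
        Fintype.sum_equiv (Equiv.addRight k) _ _ fun x => rfl
      simp only [Finset.sum_add_distrib, Finset.sum_sub_distrib] at hsum0
      rw [r1, r2] at hsum0
      rw [hNuniv, hNuniv, hNuniv]
      have h6 : ∑ h : ZMod n, f 1 h (k + l) - (∑ h : ZMod n, f 1 h k + ∑ h : ZMod n, f 1 h l)
          = -(∑ h : ZMod n, f h k l - ∑ h : ZMod n, f h k l + ∑ h : ZMod n, f 1 h l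
              - ∑ h : ZMod n, f 1 h (k + l) + ∑ h : ZMod n, f 1 h k) := by abel
      rw [← sub_eq_zero, h6, hsum0, neg_zero]
    have hN0 : Nsum n f 0 = 0 := by
      have h7 := hNadd 0 0
      rw [add_zero] at h7
      exact (left_eq_add.mp h7)
    have hNs : ∀ m : ℕ, Nsum n f ((m : ZMod n)) = m • Nsum n f 1 := by
      intro m
      induction m with
      | zero => simpa using hN0
      | succ m ih =>
        have hcast : ((m + 1 : ℕ) : ZMod n) = (m : ZMod n) + 1 := by push_cast; ring
        rw [hcast, hNadd, ih, succ_nsmul]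
    have hNn : n • Nsum n f 1 = 0 := by
      rw [← hNs n, ZMod.natCast_self, hN0]
    obtain ⟨r, hr⟩ := QuotientAddGroup.mk_surjective (Nsum n f 1)
    have hcoe : ((n • r : ℝ) : T) = 0 := by
      rw [AddCircle.coe_nsmul]
      rw [show ((r : ℝ) : T) = Nsum n f 1 from hr]
      exact hNn
    rw [AddCircle.coe_eq_zero_iff] at hcoe
    obtain ⟨m, hmm⟩ := hcoe
    have hn := hnR n
    have hrm : r = (m : ℝ) / n := by
      rw [zsmul_eq_mul, mul_one, nsmul_eq_mul] at hmm
      field_simp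
      linarith
    refine ⟨m, fun x y => (f 0 0 y - Asum n f x.val y)
        + ((((m : ℝ) * x.val * y.val / (n ^ 2 : ℝ)) : ℝ) : T), fun x k l => ?_⟩
    rw [key x k l]
    have hsplit : addD2 (fun x y => (f 0 0 y - Asum n f x.val y)
        + ((((m : ℝ) * x.val * y.val / (n ^ 2 : ℝ)) : ℝ) : T)) x k l
        = addD2 (fun x y => f 0 0 y - Asum n f x.val y) x k l
          + addD2 (fun x y => ((((m : ℝ) * x.val * y.val / (n ^ 2 : ℝ)) : ℝ) : T)) x k l := by
      simp only [addD2]; abel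
    rw [hsplit]
    have hsuf : (carr n x k) • Nsum n f l = ck n m x k l
        + addD2 (fun x y => ((((m : ℝ) * x.val * y.val / (n ^ 2 : ℝ)) : ℝ) : T)) x k l := by
      have hNl : Nsum n f l = l.val • Nsum n f 1 := by
        conv_lhs => rw [← ZMod.natCast_zmod_val l]
        exact hNs l.val
      rw [hNl, ← hr, smul_smul, ← AddCircle.coe_nsmul, nsmul_eq_mul]
      simp only [ck, addD2]
      rw [← AddCircle.coe_sub, ← AddCircle.coe_add, ← AddCircle.coe_sub, ← AddCircle.coe_add]
      refine coe_congr ?_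
      rw [hrm, val_add_real n x k, val_add_real n k l]
      push_cast
      field_simp
      ring
    rw [hsuf]
    abel


end Stmt14Aux

/-- `H³(ℤ/n, 𝕋) ≅ ℤ/n`, realized by the explicit cocycles `c_k`. -/
theorem stmt14 (n : ℕ) [NeZero n] :
    -- each c_k is a 3-cocycle:
    (∀ k : ℤ, IsAddCocycle3 (ck n k)) ∧
    -- c_k is a coboundary iff n ∣ k (injectivity of k ↦ [c_k] on ℤ/n):
    (∀ k : ℤ, (∃ b : ZMod n → ZMod n → AddCircle (1 : ℝ),
        ∀ a b' c : ZMod n, ck n k a b' c = addD2 b a b' c) ↔ (n : ℤ) ∣ k) ∧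
    -- additivity in k up to coboundary (so k ↦ [c_k] is a homomorphism):
    (∀ j k : ℤ, ∃ b : ZMod n → ZMod n → AddCircle (1 : ℝ),
      ∀ a b' c : ZMod n,
        ck n (j + k) a b' c = ck n j a b' c + ck n k a b' c + addD2 b a b' c) ∧
    -- surjectivity: every 3-cocycle is cohomologous to some c_k:
    (∀ f : ZMod n → ZMod n → ZMod n → AddCircle (1 : ℝ), IsAddCocycle3 f →
      ∃ (k : ℤ) (b : ZMod n → ZMod n → AddCircle (1 : ℝ)),
        ∀ a b' c : ZMod n, f a b' c = ck n k a b' c + addD2 b a b' c) := by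
  exact ⟨Stmt14Aux.part1 n, Stmt14Aux.part2 n, Stmt14Aux.part3 n, Stmt14Aux.part4 n⟩
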